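/- Let R be a commutative ring with identity, S a strongly multiplicative subset of R, n a positive integer, and {I_α | α ∈ Λ} a nonempty chain (with respect to inclusion) of S-n-absorbing ideals of R. Then ⋂_{α ∈ Λ} I_α is an S-n-absorbing ideal of R. -/

import Mathlib

/-- `I` is `S`-`n`-absorbing with associated element `s`. -/
def IsSNAbsorbingAssoc {R : Type*} [CommRing R] (s : R) (n : ℕ) (I : Ideal R) : Prop :=
  ∀ r : Fin (n + 1) → R, (∏ i, r i) ∈ I →
    ∃ j : Fin (n + 1), s * ∏ i ∈ Finset.univ.erase j, r i ∈ I

/-- `I` is an `S`-`n`-absorbing ideal. -/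
def IsSNAbsorbing {R : Type*} [CommRing R] (S : Set R) (n : ℕ) (I : Ideal R) : Prop :=
  ∃ s ∈ S, IsSNAbsorbingAssoc s n I
theorem stmt_10 {R : Type*} [CommRing R] (S : Submonoid R)
    (hstrong : ∀ A : Set R, A ⊆ (S : Set R) →
      ((⋂ a ∈ A, ((Ideal.span {a} : Ideal R) : Set R)) ∩ (S : Set R)).Nonempty)
    (n : ℕ) (hn : 0 < n) {ι : Type*} [Nonempty ι] (I : ι → Ideal R)
    (hchain : ∀ α β, I α ≤ I β ∨ I β ≤ I α)
    (hd : ∀ α, Disjoint ((I α : Ideal R) : Set R) (S : Set R))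
    (hA : ∀ α, IsSNAbsorbing (S : Set R) n (I α)) :
    IsSNAbsorbing (S : Set R) n (⨅ α, I α) := by
  classical
  choose s hsS hsA using hA
  obtain ⟨t, htA, htS⟩ := hstrong (Set.range s) (by rintro _ ⟨α, rfl⟩; exact hsS α)
  refine ⟨t, htS, ?_⟩
  intro r hr
  by_contra hcon
  push_neg at hcon
  have hα : ∀ j : Fin (n+1), ∃ α, t * ∏ i ∈ Finset.univ.erase j, r i ∉ I α := by
    intro j
    have h := hcon j
    simp only [Ideal.mem_iInf] at h
    push_neg at h
    exact h
  choose α hαn using hα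
  obtain ⟨J, hJmem, hJmin⟩ : ∃ J ∈ Finset.univ.image (fun j => I (α j)),
      ∀ x ∈ Finset.univ.image (fun j => I (α j)), ¬ x < J := by
    obtain ⟨m, hm⟩ := Finset.exists_minimal (s := Finset.univ.image (fun j => I (α j))) (by simp)
    exact ⟨m, hm.prop, fun x hx => hm.not_lt hx⟩
  obtain ⟨j0, -, rfl⟩ := Finset.mem_image.mp hJmem
  have hle : ∀ j, I (α j0) ≤ I (α j) := by
    intro j
    rcases hchain (α j0) (α j) with h | h
    · exact h
    · rcases eq_or_lt_of_le h with h' | h'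
      · exact le_of_eq h'.symm
      · exact absurd h' (hJmin _ (Finset.mem_image.mpr ⟨j, Finset.mem_univ j, rfl⟩))
  have hrmem : (∏ i, r i) ∈ I (α j0) := Ideal.mem_iInf.mp hr _
  obtain ⟨j, hj⟩ := hsA (α j0) r hrmem
  have ht : t ∈ Ideal.span {s (α j0)} :=
    Set.mem_iInter₂.mp htA (s (α j0)) ⟨α j0, rfl⟩
  obtain ⟨c, hc⟩ := Ideal.mem_span_singleton'.mp ht
  have hmem : t * ∏ i ∈ Finset.univ.erase j, r i ∈ I (α j0) := by
    rw [← hc, mul_assoc]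
    exact Ideal.mul_mem_left _ c hj
  exact hαn j (hle j hmem)
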